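/- Let $r, s$ be coprime squarefree positive integers and $k \geq 1$. Define $\mathcal{T}_k(\ell; q) = q^{-1/2} \sum_{\chi \bmod q \text{ primitive}} \tau(\chi)^k q^{-k/2} \chi(\ell)$ where $\tau(\chi)$ is the Gauss sum. Then $\mathcal{T}_k(m; rs) = \mathcal{T}_k(m r^k; s) \cdot \mathcal{T}_k(m s^k; r)$. -/

import Mathlib

open scoped Classical

/-- The additive character `e(x/q) = exp(2πi x/q)` on `ZMod q`. -/
noncomputable def eChar (q : ℕ) [NeZero q] (x : ZMod q) : ℂ :=
  Complex.exp (2 * Real.pi * Complex.I * x.val / q)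

/-- The Gauss sum `τ(χ) = ∑_{x mod q} χ(x) e(x/q)`. -/
noncomputable def gaussSum' (q : ℕ) [NeZero q] (χ : DirichletCharacter ℂ q) : ℂ :=
  ∑ x : ZMod q, χ x * eChar q x

/-- `𝒯_k(ℓ; q) = q^{-1/2} ∑_{χ mod q primitive} τ(χ)^k q^{-k/2} χ(ℓ)`. -/
noncomputable def Tsum (k : ℕ) (ℓ : ℤ) (q : ℕ) [NeZero q] : ℂ :=
  (((q : ℝ) ^ (-(1:ℝ)/2) : ℝ) : ℂ) *
    ∑ χ : DirichletCharacter ℂ q, if χ.IsPrimitive then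
      gaussSum' q χ ^ k / (((q : ℝ) ^ ((k:ℝ)/2) : ℝ) : ℂ) * χ (ℓ : ZMod q) else 0

section TsumAux

open DirichletCharacter ZMod

lemma castHom_comp_apply {a b n : ℕ} (h1 : a ∣ b) (h2 : b ∣ n) (x : ZMod n) :
    ZMod.castHom (h1.trans h2) (ZMod a) x =
      ZMod.castHom h1 (ZMod a) (ZMod.castHom h2 (ZMod b) x) := by
  have h : ZMod.castHom (h1.trans h2) (ZMod a)
      = (ZMod.castHom h1 (ZMod a)).comp (ZMod.castHom h2 (ZMod b)) := Subsingleton.elim _ _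
  rw [h]; rfl

lemma crt_fst' {r s : ℕ} (hrs : Nat.Coprime r s) (x : ZMod (r*s)) :
    (ZMod.chineseRemainder hrs x).1 = ZMod.castHom (dvd_mul_right r s) (ZMod r) x := by
  have h : (RingHom.fst (ZMod r) (ZMod s)).comp ((ZMod.chineseRemainder hrs : ZMod (r*s) ≃+* ZMod r × ZMod s) : ZMod (r*s) →+* ZMod r × ZMod s)
      = ZMod.castHom (dvd_mul_right r s) (ZMod r) := Subsingleton.elim _ _
  exact DFunLike.congr_fun h x

lemma crt_snd' {r s : ℕ} (hrs : Nat.Coprime r s) (x : ZMod (r*s)) :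
    (ZMod.chineseRemainder hrs x).2 = ZMod.castHom (dvd_mul_left s r) (ZMod s) x := by
  have h : (RingHom.snd (ZMod r) (ZMod s)).comp ((ZMod.chineseRemainder hrs : ZMod (r*s) ≃+* ZMod r × ZMod s) : ZMod (r*s) →+* ZMod r × ZMod s)
      = ZMod.castHom (dvd_mul_left s r) (ZMod s) := Subsingleton.elim _ _
  exact DFunLike.congr_fun h x

lemma eq_one_of_casts {d₁ d₂ : ℕ} (h : Nat.Coprime d₁ d₂) {y : ZMod (d₁*d₂)}
    (hy1 : ZMod.castHom (dvd_mul_right d₁ d₂) (ZMod d₁) y = 1)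
    (hy2 : ZMod.castHom (dvd_mul_left d₂ d₁) (ZMod d₂) y = 1) : y = 1 := by
  apply (ZMod.chineseRemainder h).injective
  rw [map_one]
  refine Prod.ext ?_ ?_
  · rw [crt_fst' h, hy1]; rfl
  · rw [crt_snd' h, hy2]; rfl

variable {r s : ℕ} [NeZero r] [NeZero s]

lemma crt_fst (hrs : Nat.Coprime r s) (x : ZMod (r*s)) :
    (ZMod.chineseRemainder hrs x).1 = ZMod.castHom (dvd_mul_right r s) (ZMod r) x := by
  have h : (RingHom.fst (ZMod r) (ZMod s)).comp ((ZMod.chineseRemainder hrs : ZMod (r*s) ≃+* ZMod r × ZMod s) : ZMod (r*s) →+* ZMod r × ZMod s)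
      = ZMod.castHom (dvd_mul_right r s) (ZMod r) := Subsingleton.elim _ _
  exact DFunLike.congr_fun h x

lemma crt_snd (hrs : Nat.Coprime r s) (x : ZMod (r*s)) :
    (ZMod.chineseRemainder hrs x).2 = ZMod.castHom (dvd_mul_left s r) (ZMod s) x := by
  have h : (RingHom.snd (ZMod r) (ZMod s)).comp ((ZMod.chineseRemainder hrs : ZMod (r*s) ≃+* ZMod r × ZMod s) : ZMod (r*s) →+* ZMod r × ZMod s)
      = ZMod.castHom (dvd_mul_left s r) (ZMod s) := Subsingleton.elim _ _
  exact DFunLike.congr_fun h x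

/-- CRT on unit groups. -/
noncomputable def crtUnits (hrs : Nat.Coprime r s) :
    (ZMod (r*s))ˣ ≃* (ZMod r)ˣ × (ZMod s)ˣ :=
  (Units.mapEquiv (ZMod.chineseRemainder hrs).toMulEquiv).trans MulEquiv.prodUnits

lemma crtUnits_fst (hrs : Nat.Coprime r s) (u : (ZMod (r*s))ˣ) :
    (crtUnits hrs u).1 = ZMod.unitsMap (dvd_mul_right r s) u := by
  ext
  show ((ZMod.chineseRemainder hrs (u : ZMod (r*s)))).1 = _
  rw [crt_fst]
  rfl

lemma crtUnits_snd (hrs : Nat.Coprime r s) (u : (ZMod (r*s))ˣ) :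
    (crtUnits hrs u).2 = ZMod.unitsMap (dvd_mul_left s r) u := by
  ext
  show ((ZMod.chineseRemainder hrs (u : ZMod (r*s)))).2 = _
  rw [crt_snd]
  rfl

lemma isUnit_iff' {r s : ℕ} [NeZero r] [NeZero s] (x : ZMod (r*s)) :
    IsUnit x ↔ IsUnit (ZMod.castHom (dvd_mul_right r s) (ZMod r) x) ∧
      IsUnit (ZMod.castHom (dvd_mul_left s r) (ZMod s) x) := by
  have hx : x = ((x.val : ℕ) : ZMod (r*s)) := by simp [ZMod.natCast_val, ZMod.cast_id]
  rw [hx, ZMod.isUnit_iff_coprime]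
  simp only [map_natCast]
  rw [ZMod.isUnit_iff_coprime, ZMod.isUnit_iff_coprime]
  exact Nat.coprime_mul_iff_right

noncomputable def pairChar (r s : ℕ) (ψ : DirichletCharacter ℂ r) (ν : DirichletCharacter ℂ s) :
    DirichletCharacter ℂ (r*s) :=
  changeLevel (dvd_mul_right r s) ψ * changeLevel (dvd_mul_left s r) ν

lemma pairChar_apply (ψ : DirichletCharacter ℂ r)
    (ν : DirichletCharacter ℂ s) (x : ZMod (r*s)) :
    pairChar r s ψ ν x = ψ (ZMod.castHom (dvd_mul_right r s) (ZMod r) x) *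
      ν (ZMod.castHom (dvd_mul_left s r) (ZMod s) x) := by
  by_cases hx : IsUnit x
  · rw [pairChar, MulChar.mul_apply, ← hx.unit_spec,
      DirichletCharacter.changeLevel_eq_cast_of_dvd, DirichletCharacter.changeLevel_eq_cast_of_dvd]
    simp [ZMod.castHom_apply]
  · rw [(pairChar r s ψ ν).map_nonunit hx]
    have h : ¬ (IsUnit (ZMod.castHom (dvd_mul_right r s) (ZMod r) x) ∧
        IsUnit (ZMod.castHom (dvd_mul_left s r) (ZMod s) x)) :=
      fun hh => hx ((isUnit_iff' x).mpr hh)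
    rcases not_and_or.mp h with h | h
    · rw [ψ.map_nonunit h, zero_mul]
    · rw [ν.map_nonunit h, mul_zero]

lemma castHom_coe_symm_fst (hrs : Nat.Coprime r s) (p : (ZMod r)ˣ × (ZMod s)ˣ) :
    ZMod.castHom (dvd_mul_right r s) (ZMod r) ((((crtUnits hrs).symm p : (ZMod (r*s))ˣ)) : ZMod (r*s)) = ↑p.1 := by
  have := crtUnits_fst hrs ((crtUnits hrs).symm p)
  rw [MulEquiv.apply_symm_apply] at this
  exact (congrArg (Units.val) this).symm

lemma castHom_coe_symm_snd (hrs : Nat.Coprime r s) (p : (ZMod r)ˣ × (ZMod s)ˣ) :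
    ZMod.castHom (dvd_mul_left s r) (ZMod s) ((((crtUnits hrs).symm p : (ZMod (r*s))ˣ)) : ZMod (r*s)) = ↑p.2 := by
  have := crtUnits_snd hrs ((crtUnits hrs).symm p)
  rw [MulEquiv.apply_symm_apply] at this
  exact (congrArg (Units.val) this).symm

lemma pairChar_bijective (hrs : Nat.Coprime r s) :
    Function.Bijective (fun p : DirichletCharacter ℂ r × DirichletCharacter ℂ s =>
      pairChar r s p.1 p.2) := by
  constructor
  · rintro ⟨ψ, ν⟩ ⟨ψ', ν'⟩ h
    simp only [Prod.mk.injEq]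
    have key : ∀ (x : ZMod (r*s)), pairChar r s ψ ν x = pairChar r s ψ' ν' x :=
      fun x => congrFun (congrArg _ h) x
    constructor
    · apply MulChar.ext
      intro a
      have := key ((crtUnits hrs).symm (a, 1) : (ZMod (r*s))ˣ)
      rwa [pairChar_apply, pairChar_apply, castHom_coe_symm_fst, castHom_coe_symm_snd,
        Units.val_one, map_one, map_one, mul_one, mul_one] at this
    · apply MulChar.ext
      intro b
      have := key ((crtUnits hrs).symm (1, b) : (ZMod (r*s))ˣ)
      rwa [pairChar_apply, pairChar_apply, castHom_coe_symm_fst, castHom_coe_symm_snd,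
        Units.val_one, map_one, map_one, one_mul, one_mul] at this
  · intro χ
    refine ⟨(MulChar.ofUnitHom (χ.toUnitHom.comp ((crtUnits hrs).symm.toMonoidHom.comp
        (MonoidHom.inl _ _))),
      MulChar.ofUnitHom (χ.toUnitHom.comp ((crtUnits hrs).symm.toMonoidHom.comp
        (MonoidHom.inr _ _)))), ?_⟩
    apply MulChar.ext
    intro u
    rw [pairChar_apply]
    have h1 : ZMod.castHom (dvd_mul_right r s) (ZMod r) (u : ZMod (r*s)) = ↑((crtUnits hrs u).1) := by
      rw [crtUnits_fst]; rfl
    have h2 : ZMod.castHom (dvd_mul_left s r) (ZMod s) (u : ZMod (r*s)) = ↑((crtUnits hrs u).2) := by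
      rw [crtUnits_snd]; rfl
    rw [h1, h2, MulChar.ofUnitHom_coe, MulChar.ofUnitHom_coe]
    simp only [MonoidHom.comp_apply, MonoidHom.coe_coe, MulEquiv.coe_toMonoidHom,
      MonoidHom.inl_apply, MonoidHom.inr_apply]
    rw [← MulChar.coe_toUnitHom, ← Units.val_mul, ← map_mul, ← map_mul]
    have : (((crtUnits hrs u).1, (1 : (ZMod s)ˣ)) * ((1 : (ZMod r)ˣ), (crtUnits hrs u).2)) =
        crtUnits hrs u := by
      ext <;> simp
    rw [this, MulEquiv.symm_apply_apply]

lemma unitsMap_eq_one_iff {n d : ℕ} (h : d ∣ n) (u : (ZMod n)ˣ) :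
    ZMod.unitsMap h u = 1 ↔ ZMod.castHom h (ZMod d) (u : ZMod n) = 1 := by
  rw [Units.ext_iff]; rfl

lemma factorsThrough_pairChar_iff (hrs : Nat.Coprime r s)
    (ψ : DirichletCharacter ℂ r) (ν : DirichletCharacter ℂ s) {d₁ d₂ : ℕ}
    (hd₁ : d₁ ∣ r) (hd₂ : d₂ ∣ s) :
    (pairChar r s ψ ν).FactorsThrough (d₁ * d₂) ↔
      ψ.FactorsThrough d₁ ∧ ν.FactorsThrough d₂ := by
  haveI : NeZero (r * s) := ⟨mul_ne_zero (NeZero.ne r) (NeZero.ne s)⟩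
  have hdd : d₁ * d₂ ∣ r * s := mul_dvd_mul hd₁ hd₂
  have hcop : Nat.Coprime d₁ d₂ :=
    Nat.Coprime.coprime_dvd_left hd₁ (Nat.Coprime.coprime_dvd_right hd₂ hrs)
  rw [factorsThrough_iff_ker_unitsMap hdd, factorsThrough_iff_ker_unitsMap hd₁,
    factorsThrough_iff_ker_unitsMap hd₂]
  constructor
  · intro h
    constructor
    · intro u hu
      rw [MonoidHom.mem_ker, unitsMap_eq_one_iff] at hu
      set x : (ZMod (r*s))ˣ := (crtUnits hrs).symm (u, 1) with hxdef
      have hker : x ∈ (ZMod.unitsMap hdd).ker := by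
        rw [MonoidHom.mem_ker, unitsMap_eq_one_iff]
        refine eq_one_of_casts hcop ?_ ?_
        · rw [← castHom_comp_apply (dvd_mul_right d₁ d₂) hdd,
            castHom_comp_apply hd₁ (dvd_mul_right r s), castHom_coe_symm_fst hrs]
          exact hu
        · rw [← castHom_comp_apply (dvd_mul_left d₂ d₁) hdd,
            castHom_comp_apply hd₂ (dvd_mul_left s r), castHom_coe_symm_snd hrs]
          rw [Units.val_one, map_one]
      have := h hker
      rw [MonoidHom.mem_ker] at this
      rw [MonoidHom.mem_ker]
      ext
      have hval : (pairChar r s ψ ν) (x : ZMod (r*s)) = 1 := by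
        rw [← MulChar.coe_toUnitHom, this, Units.val_one]
      rw [pairChar_apply, hxdef, castHom_coe_symm_fst hrs, castHom_coe_symm_snd hrs] at hval
      simpa using hval
    · intro u hu
      rw [MonoidHom.mem_ker, unitsMap_eq_one_iff] at hu
      set x : (ZMod (r*s))ˣ := (crtUnits hrs).symm (1, u) with hxdef
      have hker : x ∈ (ZMod.unitsMap hdd).ker := by
        rw [MonoidHom.mem_ker, unitsMap_eq_one_iff]
        refine eq_one_of_casts hcop ?_ ?_
        · rw [← castHom_comp_apply (dvd_mul_right d₁ d₂) hdd,
            castHom_comp_apply hd₁ (dvd_mul_right r s), castHom_coe_symm_fst hrs]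
          rw [Units.val_one, map_one]
        · rw [← castHom_comp_apply (dvd_mul_left d₂ d₁) hdd,
            castHom_comp_apply hd₂ (dvd_mul_left s r), castHom_coe_symm_snd hrs]
          exact hu
      have := h hker
      rw [MonoidHom.mem_ker] at this
      rw [MonoidHom.mem_ker]
      ext
      have hval : (pairChar r s ψ ν) (x : ZMod (r*s)) = 1 := by
        rw [← MulChar.coe_toUnitHom, this, Units.val_one]
      rw [pairChar_apply, hxdef, castHom_coe_symm_fst hrs, castHom_coe_symm_snd hrs] at hval
      simpa using hval
  · rintro ⟨h1, h2⟩ u hu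
    rw [MonoidHom.mem_ker, unitsMap_eq_one_iff] at hu
    have hu1 : ZMod.unitsMap hd₁ (ZMod.unitsMap (dvd_mul_right r s) u) = 1 := by
      rw [unitsMap_eq_one_iff]
      show ZMod.castHom hd₁ (ZMod d₁) (ZMod.castHom (dvd_mul_right r s) (ZMod r) (u : ZMod (r*s))) = 1
      rw [← castHom_comp_apply hd₁ (dvd_mul_right r s),
        castHom_comp_apply (dvd_mul_right d₁ d₂) hdd, hu]
      exact map_one _
    have hu2 : ZMod.unitsMap hd₂ (ZMod.unitsMap (dvd_mul_left s r) u) = 1 := by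
      rw [unitsMap_eq_one_iff]
      show ZMod.castHom hd₂ (ZMod d₂) (ZMod.castHom (dvd_mul_left s r) (ZMod s) (u : ZMod (r*s))) = 1
      rw [← castHom_comp_apply hd₂ (dvd_mul_left s r),
        castHom_comp_apply (dvd_mul_left d₂ d₁) hdd, hu]
      exact map_one _
    have e1 := h1 (MonoidHom.mem_ker.mpr hu1)
    have e2 := h2 (MonoidHom.mem_ker.mpr hu2)
    rw [MonoidHom.mem_ker] at e1 e2
    rw [MonoidHom.mem_ker]
    ext
    rw [MulChar.coe_toUnitHom, pairChar_apply]
    have c1 : ψ (ZMod.castHom (dvd_mul_right r s) (ZMod r) (u : ZMod (r*s))) = 1 := by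
      have := congrArg Units.val e1
      rwa [MulChar.coe_toUnitHom] at this
    have c2 : ν (ZMod.castHom (dvd_mul_left s r) (ZMod s) (u : ZMod (r*s))) = 1 := by
      have := congrArg Units.val e2
      rwa [MulChar.coe_toUnitHom] at this
    rw [c1, c2, mul_one, Units.val_one]

lemma pairChar_isPrimitive_iff (hrs : Nat.Coprime r s)
    (ψ : DirichletCharacter ℂ r) (ν : DirichletCharacter ℂ s) :
    (pairChar r s ψ ν).IsPrimitive ↔ ψ.IsPrimitive ∧ ν.IsPrimitive := by
  haveI : NeZero (r * s) := ⟨mul_ne_zero (NeZero.ne r) (NeZero.ne s)⟩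
  constructor
  · intro h
    constructor
    · have hft : (pairChar r s ψ ν).FactorsThrough (ψ.conductor * s) :=
        (factorsThrough_pairChar_iff hrs ψ ν (conductor_dvd_level ψ) dvd_rfl).mpr
          ⟨factorsThrough_conductor ψ, DirichletCharacter.FactorsThrough.same_level ν⟩
      have hle : (pairChar r s ψ ν).conductor ≤ ψ.conductor * s := Nat.sInf_le hft
      rw [h] at hle
      have hr : r ≤ ψ.conductor :=
        Nat.le_of_mul_le_mul_right hle (Nat.pos_of_ne_zero (NeZero.ne s))
      exact Nat.le_antisymm (Nat.le_of_dvd (Nat.pos_of_ne_zero (NeZero.ne r))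
        (conductor_dvd_level ψ)) hr
    · have hft : (pairChar r s ψ ν).FactorsThrough (r * ν.conductor) :=
        (factorsThrough_pairChar_iff hrs ψ ν dvd_rfl (conductor_dvd_level ν)).mpr
          ⟨DirichletCharacter.FactorsThrough.same_level ψ, factorsThrough_conductor ν⟩
      have hle : (pairChar r s ψ ν).conductor ≤ r * ν.conductor := Nat.sInf_le hft
      rw [h] at hle
      have hs : s ≤ ν.conductor :=
        Nat.le_of_mul_le_mul_left hle (Nat.pos_of_ne_zero (NeZero.ne r))
      exact Nat.le_antisymm (Nat.le_of_dvd (Nat.pos_of_ne_zero (NeZero.ne s))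
        (conductor_dvd_level ν)) hs
  · rintro ⟨h1, h2⟩
    set χ := pairChar r s ψ ν with hχ
    obtain ⟨⟨⟨d₁, hd₁⟩, ⟨d₂, hd₂⟩⟩, hc⟩ :=
      Nat.dvdProdDvdOfDvdProd (conductor_dvd_level χ)
    have hft : χ.FactorsThrough (d₁ * d₂) := hc ▸ factorsThrough_conductor χ
    rw [factorsThrough_pairChar_iff hrs ψ ν hd₁ hd₂] at hft
    have e1 : d₁ = r := Nat.le_antisymm (Nat.le_of_dvd (Nat.pos_of_ne_zero (NeZero.ne r)) hd₁)
      (h1 ▸ Nat.sInf_le hft.1)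
    have e2 : d₂ = s := Nat.le_antisymm (Nat.le_of_dvd (Nat.pos_of_ne_zero (NeZero.ne s)) hd₂)
      (h2 ▸ Nat.sInf_le hft.2)
    show χ.conductor = r * s
    rw [hc]
    simp only
    rw [e1, e2]

lemma eChar_natCast (q : ℕ) [NeZero q] (N : ℕ) :
    eChar q ((N : ℕ) : ZMod q) = Complex.exp (2 * Real.pi * Complex.I * N / q) := by
  have hq : (q : ℂ) ≠ 0 := Nat.cast_ne_zero.mpr (NeZero.ne q)
  rw [eChar, ZMod.val_natCast]
  have h : ((N % q : ℕ) : ℂ) + ((N / q : ℕ) : ℂ) * (q : ℂ) = (N : ℂ) := by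
    have h1 : N % q + N / q * q = N := by rw [mul_comm]; exact Nat.mod_add_div N q
    exact_mod_cast congrArg (Nat.cast : ℕ → ℂ) h1
  have key : (2 * (Real.pi : ℂ) * Complex.I * N / q) =
      2 * Real.pi * Complex.I * ((N % q : ℕ) : ℂ) / q +
        ((N / q : ℕ) : ℂ) * (2 * Real.pi * Complex.I) := by
    rw [← h]
    field_simp
  rw [key, Complex.exp_add, Complex.exp_nat_mul, Complex.exp_two_pi_mul_I, one_pow, mul_one]

/-- Multiplication by a unit as an equivalence. -/
def unitMul {M : Type*} [Monoid M] (u : Mˣ) : M ≃ M where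
  toFun x := u * x
  invFun x := (u⁻¹ : Mˣ) * x
  left_inv x := by
    show (u⁻¹ : Mˣ) * ((u : M) * x) = x
    rw [← mul_assoc, Units.inv_mul, one_mul]
  right_inv x := by
    show (u : M) * (((u⁻¹ : Mˣ) : M) * x) = x
    rw [← mul_assoc, Units.mul_inv, one_mul]

lemma castHom_crtSymm_fst (hrs : Nat.Coprime r s) (p : ZMod r × ZMod s) :
    ZMod.castHom (dvd_mul_right r s) (ZMod r) ((ZMod.chineseRemainder hrs).symm p) = p.1 := by
  rw [← crt_fst' hrs, RingEquiv.apply_symm_apply]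

lemma castHom_crtSymm_snd (hrs : Nat.Coprime r s) (p : ZMod r × ZMod s) :
    ZMod.castHom (dvd_mul_left s r) (ZMod s) ((ZMod.chineseRemainder hrs).symm p) = p.2 := by
  rw [← crt_snd' hrs, RingEquiv.apply_symm_apply]

lemma crtSymm_eq_natCast (hrs : Nat.Coprime r s) (a : ZMod r) (b : ZMod s) :
    (ZMod.chineseRemainder hrs).symm (((s : ℕ) : ZMod r) * a, ((r : ℕ) : ZMod s) * b) =
      ((s * a.val + r * b.val : ℕ) : ZMod (r * s)) := by
  apply (ZMod.chineseRemainder hrs).injective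
  rw [RingEquiv.apply_symm_apply]
  refine Prod.ext ?_ ?_
  · rw [crt_fst' hrs, map_natCast]
    push_cast
    rw [ZMod.natCast_val, ZMod.cast_id, ZMod.natCast_self, zero_mul, add_zero]
  · rw [crt_snd' hrs, map_natCast]
    push_cast
    rw [ZMod.natCast_self, zero_mul, zero_add, ZMod.natCast_val, ZMod.cast_id]

lemma gaussSum'_pairChar (hrs : Nat.Coprime r s)
    (ψ : DirichletCharacter ℂ r) (ν : DirichletCharacter ℂ s) :
    haveI : NeZero (r * s) := ⟨mul_ne_zero (NeZero.ne r) (NeZero.ne s)⟩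
    gaussSum' (r * s) (pairChar r s ψ ν) =
      (ψ ((s : ℕ) : ZMod r) * ν ((r : ℕ) : ZMod s)) * (gaussSum' r ψ * gaussSum' s ν) := by
  haveI : NeZero (r * s) := ⟨mul_ne_zero (NeZero.ne r) (NeZero.ne s)⟩
  have hsu : IsUnit ((s : ℕ) : ZMod r) := (ZMod.isUnit_iff_coprime s r).mpr hrs.symm
  have hru : IsUnit ((r : ℕ) : ZMod s) := (ZMod.isUnit_iff_coprime r s).mpr hrs
  have hrC : (r : ℂ) ≠ 0 := Nat.cast_ne_zero.mpr (NeZero.ne r)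
  have hsC : (s : ℂ) ≠ 0 := Nat.cast_ne_zero.mpr (NeZero.ne s)
  set Φ : ZMod r × ZMod s ≃ ZMod (r * s) :=
    (Equiv.prodCongr (unitMul hsu.unit) (unitMul hru.unit)).trans
      (ZMod.chineseRemainder hrs).toEquiv.symm with hΦ
  have hΦapp : ∀ (a : ZMod r) (b : ZMod s),
      Φ (a, b) = (ZMod.chineseRemainder hrs).symm (((s : ℕ) : ZMod r) * a, ((r : ℕ) : ZMod s) * b) := by
    intro a b
    simp only [hΦ, Equiv.trans_apply, Equiv.prodCongr_apply, Prod.map, unitMul,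
      Equiv.coe_fn_mk, IsUnit.unit_spec]
    rfl
  have hterm : ∀ (a : ZMod r) (b : ZMod s),
      (pairChar r s ψ ν) (Φ (a, b)) * eChar (r * s) (Φ (a, b)) =
        (ψ ((s : ℕ) : ZMod r) * (ψ a * eChar r a)) * (ν ((r : ℕ) : ZMod s) * (ν b * eChar s b)) := by
    intro a b
    rw [hΦapp a b, pairChar_apply, castHom_crtSymm_fst hrs, castHom_crtSymm_snd hrs]
    have he : eChar (r * s) ((ZMod.chineseRemainder hrs).symm
        (((s : ℕ) : ZMod r) * a, ((r : ℕ) : ZMod s) * b)) = eChar r a * eChar s b := by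
      rw [crtSymm_eq_natCast hrs, eChar_natCast, eChar, eChar, ← Complex.exp_add]
      congr 1
      push_cast
      field_simp
    rw [he, map_mul, map_mul]
    ring
  rw [gaussSum', ← Equiv.sum_comp Φ (fun x => (pairChar r s ψ ν) x * eChar (r * s) x),
    Fintype.sum_prod_type]
  calc (∑ a : ZMod r, ∑ b : ZMod s, (pairChar r s ψ ν) (Φ (a, b)) * eChar (r * s) (Φ (a, b)))
      = ∑ a : ZMod r, ∑ b : ZMod s,
        (ψ ((s : ℕ) : ZMod r) * (ψ a * eChar r a)) * (ν ((r : ℕ) : ZMod s) * (ν b * eChar s b)) :=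
        Finset.sum_congr rfl fun a _ => Finset.sum_congr rfl fun b _ => hterm a b
    _ = (∑ a : ZMod r, ψ ((s : ℕ) : ZMod r) * (ψ a * eChar r a)) *
        (∑ b : ZMod s, ν ((r : ℕ) : ZMod s) * (ν b * eChar s b)) :=
        (Finset.sum_mul_sum _ _ _ _).symm
    _ = (ψ ((s : ℕ) : ZMod r) * ν ((r : ℕ) : ZMod s)) * (gaussSum' r ψ * gaussSum' s ν) := by
        rw [← Finset.mul_sum, ← Finset.mul_sum, gaussSum', gaussSum']
        ring

end TsumAux

/-- Twisted multiplicativity: for coprime squarefree `r, s` and `k ≥ 1`,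
`𝒯_k(m; rs) = 𝒯_k(m r^k; s) ⬝ 𝒯_k(m s^k; r)`. -/
theorem Tsum_mul (r s : ℕ) [NeZero r] [NeZero s] (hr : Squarefree r) (hs : Squarefree s)
    (hrs : Nat.Coprime r s) (k : ℕ) (hk : 1 ≤ k) (m : ℤ) :
    Tsum k m (r * s) = Tsum k (m * (r : ℤ) ^ k) s * Tsum k (m * (s : ℤ) ^ k) r := by
  haveI : NeZero (r * s) := ⟨mul_ne_zero (NeZero.ne r) (NeZero.ne s)⟩
  have hA : (((r * s : ℕ) : ℝ) ^ (-(1:ℝ)/2)) = ((r : ℝ) ^ (-(1:ℝ)/2)) * ((s : ℝ) ^ (-(1:ℝ)/2)) := by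
    rw [Nat.cast_mul]
    exact Real.mul_rpow (Nat.cast_nonneg r) (Nat.cast_nonneg s)
  have hB : (((r * s : ℕ) : ℝ) ^ ((k:ℝ)/2)) = ((r : ℝ) ^ ((k:ℝ)/2)) * ((s : ℝ) ^ ((k:ℝ)/2)) := by
    rw [Nat.cast_mul]
    exact Real.mul_rpow (Nat.cast_nonneg r) (Nat.cast_nonneg s)
  have hterm : ∀ (ψ : DirichletCharacter ℂ r) (ν : DirichletCharacter ℂ s),
      (if (pairChar r s ψ ν).IsPrimitive then
        gaussSum' (r * s) (pairChar r s ψ ν) ^ k /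
          ((((r * s : ℕ) : ℝ) ^ ((k:ℝ)/2) : ℝ) : ℂ) * (pairChar r s ψ ν) (m : ZMod (r * s))
        else 0)
      = (if ψ.IsPrimitive then
          gaussSum' r ψ ^ k / (((r : ℝ) ^ ((k:ℝ)/2) : ℝ) : ℂ) *
            ψ ((m * (s : ℤ) ^ k : ℤ) : ZMod r) else 0) *
        (if ν.IsPrimitive then
          gaussSum' s ν ^ k / (((s : ℝ) ^ ((k:ℝ)/2) : ℝ) : ℂ) *
            ν ((m * (r : ℤ) ^ k : ℤ) : ZMod s) else 0) := by
    intro ψ ν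
    by_cases hψ : ψ.IsPrimitive
    · by_cases hν : ν.IsPrimitive
      · rw [if_pos ((pairChar_isPrimitive_iff hrs ψ ν).mpr ⟨hψ, hν⟩), if_pos hψ, if_pos hν]
        have hm : (pairChar r s ψ ν) (m : ZMod (r * s)) =
            ψ ((m : ℤ) : ZMod r) * ν ((m : ℤ) : ZMod s) := by
          rw [pairChar_apply, map_intCast (ZMod.castHom (dvd_mul_right r s) (ZMod r)) m,
            map_intCast (ZMod.castHom (dvd_mul_left s r) (ZMod s)) m]
        have hψm : ψ ((m * (s : ℤ) ^ k : ℤ) : ZMod r) =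
            ψ ((m : ℤ) : ZMod r) * ψ ((s : ℕ) : ZMod r) ^ k := by
          have h : ((m * (s : ℤ) ^ k : ℤ) : ZMod r) =
              ((m : ℤ) : ZMod r) * ((s : ℕ) : ZMod r) ^ k := by push_cast; ring
          rw [h, map_mul, map_pow]
        have hνm : ν ((m * (r : ℤ) ^ k : ℤ) : ZMod s) =
            ν ((m : ℤ) : ZMod s) * ν ((r : ℕ) : ZMod s) ^ k := by
          have h : ((m * (r : ℤ) ^ k : ℤ) : ZMod s) =
              ((m : ℤ) : ZMod s) * ((r : ℕ) : ZMod s) ^ k := by push_cast; ring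
          rw [h, map_mul, map_pow]
        rw [hm, hψm, hνm, gaussSum'_pairChar hrs, hB, Complex.ofReal_mul]
        ring
      · rw [if_neg hν, if_neg (fun hh => hν ((pairChar_isPrimitive_iff hrs ψ ν).mp hh).2), mul_zero]
    · rw [if_neg hψ, if_neg (fun hh => hψ ((pairChar_isPrimitive_iff hrs ψ ν).mp hh).1), zero_mul]
  have key : (∑ χ : DirichletCharacter ℂ (r * s), if χ.IsPrimitive then
        gaussSum' (r * s) χ ^ k / ((((r * s : ℕ) : ℝ) ^ ((k:ℝ)/2) : ℝ) : ℂ) *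
          χ (m : ZMod (r * s)) else 0)
      = (∑ ψ : DirichletCharacter ℂ r, if ψ.IsPrimitive then
          gaussSum' r ψ ^ k / (((r : ℝ) ^ ((k:ℝ)/2) : ℝ) : ℂ) *
            ψ ((m * (s : ℤ) ^ k : ℤ) : ZMod r) else 0) *
        (∑ ν : DirichletCharacter ℂ s, if ν.IsPrimitive then
          gaussSum' s ν ^ k / (((s : ℝ) ^ ((k:ℝ)/2) : ℝ) : ℂ) *
            ν ((m * (r : ℤ) ^ k : ℤ) : ZMod s) else 0) := by
    rw [← Equiv.sum_comp (Equiv.ofBijective _ (pairChar_bijective hrs))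
      (fun χ : DirichletCharacter ℂ (r * s) => if χ.IsPrimitive then
        gaussSum' (r * s) χ ^ k / ((((r * s : ℕ) : ℝ) ^ ((k:ℝ)/2) : ℝ) : ℂ) *
          χ (m : ZMod (r * s)) else 0), Fintype.sum_prod_type]
    rw [Finset.sum_mul_sum]
    refine Finset.sum_congr rfl fun ψ _ => Finset.sum_congr rfl fun ν _ => ?_
    exact hterm ψ ν
  rw [Tsum, Tsum, Tsum, key, hA, Complex.ofReal_mul]
  ring
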